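/- Let S, P be disjoint finite sets, let V_SP ⊆ ℂ^{S⊎P} and V_P ⊆ ℂ^P be ℂ-linear subspaces. Then (V_SP ↔ V_P)^⊥ = V_SP^⊥ ↔ V_P^⊥, where V_SP ↔ V_P := {f_S ∈ ℂ^S : there exists h_P ∈ V_P with (f_S,h_P) ∈ V_SP}, and the orthogonal complement on the left is taken in ℂ^S. -/

import Mathlib

/-!
STATEMENT 5: Let S, P be disjoint finite sets, let V_SP ⊆ ℂ^{S⊎P} and V_P ⊆ ℂ^P be
ℂ-linear subspaces. Then (V_SP ↔ V_P)^⊥ = V_SP^⊥ ↔ V_P^⊥, where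
V_SP ↔ V_P := {f_S : ∃ h_P ∈ V_P, (f_S,h_P) ∈ V_SP} and the orthogonal complement on
the left is taken in ℂ^S.
-/

/-- Hermitian inner product on `ℂ^X`: `⟨f,g⟩ = Σ_e f e * conj (g e)`. -/
noncomputable def hinner {X : Type*} [Fintype X] (f g : X → ℂ) : ℂ :=
  ∑ e, f e * (starRingEnd ℂ) (g e)

/-- Orthogonal complement (as a set) of a collection of vectors in `ℂ^X`. -/
def perpSet {X : Type*} [Fintype X] (K : Set (X → ℂ)) : Set (X → ℂ) :=
  {g | ∀ f ∈ K, hinner f g = 0}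

/-- Orthogonal complement (as a set) in `ℂ^{X⊎Y} = ℂ^X × ℂ^Y`. -/
def pperp {X Y : Type*} [Fintype X] [Fintype Y] (K : Set ((X → ℂ) × (Y → ℂ))) :
    Set ((X → ℂ) × (Y → ℂ)) :=
  {g | ∀ f ∈ K, hinner f.1 g.1 + hinner f.2 g.2 = 0}

/-- Matched composition with a collection on the second factor:
`K_SP ↔ K_P := {f_S : ∃ h_P ∈ K_P, (f_S,h_P) ∈ K_SP}`. -/
def matched1 {S P : Type*} (KSP : Set ((S → ℂ) × (P → ℂ))) (KP : Set (P → ℂ)) :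
    Set (S → ℂ) :=
  {fS | ∃ h ∈ KP, (fS, h) ∈ KSP}

lemma hinner_eq {X : Type*} [Fintype X] (f g : X → ℂ) :
    hinner f g = @inner ℂ (EuclideanSpace ℂ X) _ (WithLp.toLp 2 g) (WithLp.toLp 2 f) := by
  simp [hinner, PiLp.inner_apply, mul_comm]

theorem statement5 (S P : Type*) [Fintype S] [Fintype P]
    (VSP : Submodule ℂ ((S → ℂ) × (P → ℂ))) (VP : Submodule ℂ (P → ℂ)) :
    perpSet (matched1 (VSP : Set ((S → ℂ) × (P → ℂ))) (VP : Set (P → ℂ)))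
      = matched1 (pperp (VSP : Set ((S → ℂ) × (P → ℂ))))
          (perpSet (VP : Set (P → ℂ))) := by
  classical
  set E := EuclideanSpace ℂ S
  set F := EuclideanSpace ℂ P
  set G := WithLp 2 (E × F) with hG
  haveI : FiniteDimensional ℂ G := inferInstance
  let Φ : G →ₗ[ℂ] (S → ℂ) × (P → ℂ) :=
    ((WithLp.linearEquiv 2 ℂ (S → ℂ)).toLinearMap.prodMap
      (WithLp.linearEquiv 2 ℂ (P → ℂ)).toLinearMap).comp
      (WithLp.linearEquiv 2 ℂ (E × F)).toLinearMap
  let U : Submodule ℂ G := VSP.comap Φ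
  let VP' : Submodule ℂ F := VP.comap (WithLp.linearEquiv 2 ℂ (P → ℂ)).toLinearMap
  let A : Submodule ℂ G :=
    ((⊤ : Submodule ℂ E).prod VP').comap (WithLp.linearEquiv 2 ℂ (E × F)).toLinearMap
  have horth : (U ⊓ A)ᗮ = Uᗮ ⊔ Aᗮ := by
    have h1 : U ⊓ A = (Uᗮ ⊔ Aᗮ)ᗮ := by
      rw [← Submodule.inf_orthogonal, Submodule.orthogonal_orthogonal,
        Submodule.orthogonal_orthogonal]
    rw [h1, Submodule.orthogonal_orthogonal]
  ext g
  constructor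
  · intro hg
    have hg0 : (WithLp.toLp 2 (WithLp.toLp 2 g, 0) : G) ∈ (U ⊓ A)ᗮ := by
      intro u hu
      obtain ⟨huU, huA⟩ := hu
      have hu2 : WithLp.ofLp (WithLp.ofLp u).2 ∈ VP := (Submodule.mem_comap.mp huA).2
      have hmem : WithLp.ofLp (WithLp.ofLp u).1 ∈
          matched1 (VSP : Set ((S → ℂ) × (P → ℂ))) (VP : Set (P → ℂ)) :=
        ⟨WithLp.ofLp (WithLp.ofLp u).2, hu2, Submodule.mem_comap.mp huU⟩
      have h0 : hinner (WithLp.ofLp (WithLp.ofLp u).1) g = 0 := hg _ hmem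
      rw [hinner_eq] at h0
      have he : @inner ℂ G _ u (WithLp.toLp 2 (WithLp.toLp 2 g, 0) : G) =
          @inner ℂ E _ (WithLp.ofLp u).1 (WithLp.toLp 2 g) + @inner ℂ F _ (WithLp.ofLp u).2 0 :=
        WithLp.prod_inner_apply u _
      rw [he, inner_zero_right, add_zero, ← inner_eq_zero_symm]
      exact h0
    rw [horth] at hg0
    obtain ⟨y, hy, z, hz, hsum⟩ := Submodule.mem_sup.mp hg0
    have hz1 : (WithLp.ofLp z).1 = 0 := by
      have h := hz (WithLp.toLp 2 ((WithLp.ofLp z).1, 0) : G)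
        (Submodule.mem_comap.mpr ⟨trivial, VP'.zero_mem⟩)
      have he : @inner ℂ G _ (WithLp.toLp 2 ((WithLp.ofLp z).1, 0) : G) z =
          @inner ℂ E _ (WithLp.ofLp z).1 (WithLp.ofLp z).1 +
            @inner ℂ F _ (0 : F) (WithLp.ofLp z).2 :=
        WithLp.prod_inner_apply _ z
      rw [he, inner_zero_left, add_zero, inner_self_eq_zero] at h
      exact h
    have hz2 : ∀ h ∈ VP, @inner ℂ F _ (WithLp.toLp 2 h) (WithLp.ofLp z).2 = 0 := by
      intro h hh
      have h0 := hz (WithLp.toLp 2 (0, WithLp.toLp 2 h) : G)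
        (Submodule.mem_comap.mpr ⟨trivial, hh⟩)
      have he : @inner ℂ G _ (WithLp.toLp 2 (0, WithLp.toLp 2 h) : G) z =
          @inner ℂ E _ (0 : E) (WithLp.ofLp z).1 + @inner ℂ F _ (WithLp.toLp 2 h) (WithLp.ofLp z).2 :=
        WithLp.prod_inner_apply _ z
      rw [he, inner_zero_left, zero_add] at h0
      exact h0
    have h1 : (WithLp.ofLp y).1 + (WithLp.ofLp z).1 = WithLp.toLp 2 g :=
      congrArg (fun x : G => (WithLp.ofLp x).1) hsum
    have h2 : (WithLp.ofLp y).2 + (WithLp.ofLp z).2 = 0 :=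
      congrArg (fun x : G => (WithLp.ofLp x).2) hsum
    have hy1 : (WithLp.ofLp y).1 = WithLp.toLp 2 g := by rw [hz1, add_zero] at h1; exact h1
    refine ⟨WithLp.ofLp (WithLp.ofLp y).2, ?_, ?_⟩
    · intro f hf
      rw [hinner_eq, WithLp.toLp_ofLp]
      have hne : (WithLp.ofLp y).2 = -(WithLp.ofLp z).2 := eq_neg_of_add_eq_zero_left h2
      rw [hne, inner_neg_left, neg_eq_zero, ← inner_eq_zero_symm]
      exact hz2 f hf
    · intro u hu
      have hyU : (WithLp.toLp 2 (WithLp.toLp 2 g, (WithLp.ofLp y).2) : G) ∈ Uᗮ := by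
        have he : (WithLp.toLp 2 (WithLp.toLp 2 g, (WithLp.ofLp y).2) : G) = y := by
          rw [← hy1]
        rw [he]; exact hy
      have h0 : @inner ℂ G _ (WithLp.toLp 2 (WithLp.toLp 2 u.1, WithLp.toLp 2 u.2))
          (WithLp.toLp 2 (WithLp.toLp 2 g, (WithLp.ofLp y).2) : G) = 0 := hyU _ hu
      have h0' : @inner ℂ E _ (WithLp.toLp 2 u.1) (WithLp.toLp 2 g) +
          @inner ℂ F _ (WithLp.toLp 2 u.2) (WithLp.ofLp y).2 = 0 := by
        have he : @inner ℂ G _ (WithLp.toLp 2 (WithLp.toLp 2 u.1, WithLp.toLp 2 u.2))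
            (WithLp.toLp 2 (WithLp.toLp 2 g, (WithLp.ofLp y).2) : G) =
            @inner ℂ E _ (WithLp.toLp 2 u.1) (WithLp.toLp 2 g) +
              @inner ℂ F _ (WithLp.toLp 2 u.2) (WithLp.ofLp y).2 :=
          WithLp.prod_inner_apply _ _
        rw [← he]; exact h0
      have hc : hinner u.1 g + hinner u.2 (WithLp.ofLp (WithLp.ofLp y).2) =
          (starRingEnd ℂ) (@inner ℂ E _ (WithLp.toLp 2 u.1) (WithLp.toLp 2 g) +
            @inner ℂ F _ (WithLp.toLp 2 u.2) (WithLp.ofLp y).2) := by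
        rw [map_add, hinner_eq, hinner_eq, WithLp.toLp_ofLp, inner_conj_symm, inner_conj_symm]
      rw [hc, h0', map_zero]
  · rintro ⟨b, hb, hgb⟩ f ⟨h, hh, hfh⟩
    have h1 : hinner f g + hinner h b = 0 := hgb (f, h) hfh
    have h2 : hinner h b = 0 := hb h hh
    rw [h2, add_zero] at h1
    exact h1
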